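/- arXiv:2602.13638 — 2 statements merged into one kernel-verified Lean document; each statement's English description precedes it below -/
import Mathlib

section
/- The number of standard Young tableaux of a two-row Young diagram with r1 boxes in the first row and r2 = N - r1 boxes in the second row (r1 ≥ r2) equals binomial(N, r1) · (2·r1 − N + 1)/(r1 + 1). -/
/-- The two-row Young diagram with `r1` boxes in the first row and `r2 ≤ r1` in the second. -/
def twoRowDiagram (r1 r2 : ℕ) (h : r2 ≤ r1) : YoungDiagram :=
  YoungDiagram.ofRowLens [r1, r2] (by simp [List.sortedGE_iff_pairwise, h])

/-- `f` is a standard Young tableau of the Young diagram `μ` (with `N = μ.card` boxes):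
it fills the boxes with the integers `1,…,N` bijectively, strictly increasing along rows
and down columns, and is zero outside the diagram. -/
def IsSYT (μ : YoungDiagram) (f : ℕ × ℕ → ℕ) : Prop :=
  Set.BijOn f ↑μ.cells ↑(Finset.Icc 1 μ.card) ∧
  (∀ i j : ℕ, (i, j + 1) ∈ μ → f (i, j) < f (i, j + 1)) ∧
  (∀ i j : ℕ, (i + 1, j) ∈ μ → f (i, j) < f (i + 1, j)) ∧
  (∀ c : ℕ × ℕ, c ∉ μ → f c = 0)

lemma memc {μ : YoungDiagram} {x : ℕ × ℕ} : x ∈ (↑μ.cells : Set (ℕ × ℕ)) ↔ x ∈ μ := by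
  simp

lemma syt_finite (μ : YoungDiagram) : {f : ℕ × ℕ → ℕ | IsSYT μ f}.Finite := by
  rw [← Set.finite_coe_iff]
  apply Finite.of_injective
    (fun f : {f : ℕ × ℕ → ℕ | IsSYT μ f} =>
      (fun c : μ.cells => (⟨f.1 c, f.2.1.mapsTo (memc.2 c.2)⟩ : (Finset.Icc 1 μ.card : Finset ℕ))))
  intro f g hfg
  ext c
  by_cases hc : c ∈ μ
  · have := congrFun hfg ⟨c, hc⟩
    simpa using this
  · rw [f.2.2.2.2 c hc, g.2.2.2.2 c hc]

lemma syt_update_bijOn (μ μ' : YoungDiagram) (c₀ : ℕ × ℕ)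
    (hc : μ.cells = insert c₀ μ'.cells) (hc0 : c₀ ∉ μ') :
    Set.BijOn (fun f => Function.update f c₀ μ.card)
      {f | IsSYT μ' f} {f | IsSYT μ f ∧ f c₀ = μ.card} := by
  have hc0' : c₀ ∉ μ'.cells := hc0
  have hcard : μ.card = μ'.card + 1 := by
    rw [YoungDiagram.card, YoungDiagram.card, hc, Finset.card_insert_of_notMem hc0']
  have hmemμ : ∀ x : ℕ × ℕ, x ∈ μ ↔ x = c₀ ∨ x ∈ μ' := by
    intro x
    rw [← YoungDiagram.mem_cells, hc, Finset.mem_insert, YoungDiagram.mem_cells]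
  have hc0μ : c₀ ∈ μ := (hmemμ c₀).2 (Or.inl rfl)
  have hIcc : (Finset.Icc 1 μ.card : Set ℕ) = insert μ.card (Finset.Icc 1 μ'.card : Set ℕ) := by
    ext k
    simp only [Finset.coe_Icc, Set.mem_Icc, Set.mem_insert_iff, hcard]
    omega
  constructor
  · -- maps to
    rintro f ⟨⟨hmaps, hinj, hsurj⟩, hrow, hcol, hzero⟩
    have hval : ∀ x, x ∈ μ' → 1 ≤ f x ∧ f x ≤ μ'.card := by
      intro x hx
      have := hmaps (memc.2 hx)
      simpa using this
    refine ⟨⟨⟨?_, ?_, ?_⟩, ?_, ?_, ?_⟩, by simp⟩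
    · -- MapsTo
      intro x hx
      rcases (hmemμ x).1 (memc.1 hx) with rfl | hx'
      · simp only [Function.update_self, Finset.coe_Icc, Set.mem_Icc]
        omega
      · have hne : x ≠ c₀ := by rintro rfl; exact hc0 hx'
        simp only [Function.update_of_ne hne, Finset.coe_Icc, Set.mem_Icc]
        have := hval x hx'
        omega
    · -- InjOn
      intro x hx y hy hxy
      simp only at hxy
      rcases (hmemμ x).1 (memc.1 hx) with rfl | hx' <;>
        rcases (hmemμ y).1 (memc.1 hy) with rfl | hy'
      · rfl
      · exfalso
        have hne : y ≠ x := by rintro rfl; exact hc0 hy'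
        rw [Function.update_self, Function.update_of_ne hne] at hxy
        have := hval y hy'
        omega
      · exfalso
        have hne : x ≠ y := by rintro rfl; exact hc0 hx'
        rw [Function.update_of_ne hne, Function.update_self] at hxy
        have := hval x hx'
        omega
      · have hnex : x ≠ c₀ := by rintro rfl; exact hc0 hx'
        have hney : y ≠ c₀ := by rintro rfl; exact hc0 hy'
        rw [Function.update_of_ne hnex, Function.update_of_ne hney] at hxy
        exact hinj (memc.2 hx') (memc.2 hy') hxy
    · -- SurjOn
      intro k hk
      rw [hIcc] at hk
      rcases hk with rfl | hk
      · exact ⟨c₀, memc.2 hc0μ, by simp⟩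
      · obtain ⟨x, hx, hfx⟩ := hsurj hk
        have hne : x ≠ c₀ := by rintro rfl; exact hc0 (memc.1 hx)
        refine ⟨x, memc.2 ((hmemμ x).2 (Or.inr (memc.1 hx))), ?_⟩
        simpa [Function.update_of_ne hne] using hfx
    · -- rows
      intro i j hij
      by_cases h1 : (i, j + 1) = c₀
      · have hmem : (i, j) ∈ μ := μ.up_left_mem le_rfl (Nat.le_succ j) hij
        have hne : (i, j) ≠ c₀ := by
          rw [← h1]; simp
        have hmem' : (i, j) ∈ μ' := ((hmemμ _).1 hmem).resolve_left hne
        subst h1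
        simp only [Function.update_self, Function.update_of_ne hne]
        have := hval _ hmem'
        omega
      · have hmem' : (i, j + 1) ∈ μ' := ((hmemμ _).1 hij).resolve_left h1
        have hne : (i, j) ≠ c₀ := by
          rintro rfl
          exact hc0 (μ'.up_left_mem le_rfl (Nat.le_succ j) hmem')
        simp only [Function.update_of_ne hne, Function.update_of_ne h1]
        exact hrow i j hmem'
    · -- cols
      intro i j hij
      by_cases h1 : (i + 1, j) = c₀
      · have hmem : (i, j) ∈ μ := μ.up_left_mem (Nat.le_succ i) le_rfl hij
        have hne : (i, j) ≠ c₀ := by rw [← h1]; simp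
        have hmem' : (i, j) ∈ μ' := ((hmemμ _).1 hmem).resolve_left hne
        subst h1
        simp only [Function.update_self, Function.update_of_ne hne]
        have := hval _ hmem'
        omega
      · have hmem' : (i + 1, j) ∈ μ' := ((hmemμ _).1 hij).resolve_left h1
        have hne : (i, j) ≠ c₀ := by
          rintro rfl
          exact hc0 (μ'.up_left_mem (Nat.le_succ i) le_rfl hmem')
        simp only [Function.update_of_ne hne, Function.update_of_ne h1]
        exact hcol i j hmem'
    · -- zero
      intro x hx
      have hne : x ≠ c₀ := by rintro rfl; exact hx hc0μ
      have hx' : x ∉ μ' := fun h' => hx ((hmemμ x).2 (Or.inr h'))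
      simp only [Function.update_of_ne hne]
      exact hzero x hx'
  constructor
  · -- InjOn
    intro f hf g hg hfg
    have hf0 : f c₀ = 0 := hf.2.2.2 c₀ hc0
    have hg0 : g c₀ = 0 := hg.2.2.2 c₀ hc0
    simp only at hfg
    funext x
    by_cases hx : x = c₀
    · rw [hx, hf0, hg0]
    · have := congrFun hfg x
      simpa [Function.update_of_ne hx] using this
  · -- SurjOn
    rintro f ⟨⟨⟨hmaps, hinj, hsurj⟩, hrow, hcol, hzero⟩, hfc⟩
    refine ⟨Function.update f c₀ 0, ⟨⟨?_, ?_, ?_⟩, ?_, ?_, ?_⟩, ?_⟩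
    · intro x hx
      have hx' := memc.1 hx
      have hne : x ≠ c₀ := by rintro rfl; exact hc0 hx'
      have hxμ : x ∈ μ := (hmemμ x).2 (Or.inr hx')
      simp only [Function.update_of_ne hne]
      have h1 := hmaps (memc.2 hxμ)
      simp only [Finset.coe_Icc, Set.mem_Icc] at h1 ⊢
      have hne2 : f x ≠ μ.card := by
        intro he
        exact hne (hinj (memc.2 hxμ) (memc.2 hc0μ) (he.trans hfc.symm))
      omega
    · intro x hx y hy hxy
      have hnex : x ≠ c₀ := by rintro rfl; exact hc0 (memc.1 hx)
      have hney : y ≠ c₀ := by rintro rfl; exact hc0 (memc.1 hy)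
      simp only [Function.update_of_ne hnex, Function.update_of_ne hney] at hxy
      exact hinj (memc.2 ((hmemμ x).2 (Or.inr (memc.1 hx))))
        (memc.2 ((hmemμ y).2 (Or.inr (memc.1 hy)))) hxy
    · intro k hk
      simp only [Finset.coe_Icc, Set.mem_Icc] at hk
      have hk' : k ∈ (Finset.Icc 1 μ.card : Set ℕ) := by
        simp only [Finset.coe_Icc, Set.mem_Icc]; omega
      obtain ⟨x, hx, hfx⟩ := hsurj hk'
      have hne : x ≠ c₀ := by
        rintro rfl
        rw [hfc] at hfx
        omega
      have hx' : x ∈ μ' := ((hmemμ x).1 (memc.1 hx)).resolve_left hne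
      exact ⟨x, memc.2 hx', by simpa [Function.update_of_ne hne] using hfx⟩
    · intro i j hij
      have hij2 : (i, j + 1) ∈ μ := (hmemμ _).2 (Or.inr hij)
      have hij1 : (i, j) ∈ μ' := μ'.up_left_mem le_rfl (Nat.le_succ j) hij
      have hne1 : (i, j) ≠ c₀ := by rintro rfl; exact hc0 hij1
      have hne2 : (i, j + 1) ≠ c₀ := by rintro rfl; exact hc0 hij
      simp only [Function.update_of_ne hne1, Function.update_of_ne hne2]
      exact hrow i j hij2
    · intro i j hij
      have hij2 : (i + 1, j) ∈ μ := (hmemμ _).2 (Or.inr hij)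
      have hij1 : (i, j) ∈ μ' := μ'.up_left_mem (Nat.le_succ i) le_rfl hij
      have hne1 : (i, j) ≠ c₀ := by rintro rfl; exact hc0 hij1
      have hne2 : (i + 1, j) ≠ c₀ := by rintro rfl; exact hc0 hij
      simp only [Function.update_of_ne hne1, Function.update_of_ne hne2]
      exact hcol i j hij2
    · intro x hx
      by_cases hxe : x = c₀
      · rw [hxe, Function.update_self]
      · simp only [Function.update_of_ne hxe]
        exact hzero x (fun h' => hx (((hmemμ x).1 h').elim (fun he => absurd he hxe) (fun h'' => absurd h'' hx)))
    · funext x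
      by_cases hxe : x = c₀
      · subst hxe
        simp only [Function.update_self, hfc]
      · simp only [Function.update_of_ne hxe]

lemma mem_twoRow {a b : ℕ} (h : b ≤ a) {i j : ℕ} :
    (i, j) ∈ twoRowDiagram a b h ↔ (i = 0 ∧ j < a) ∨ (i = 1 ∧ j < b) := by
  rw [twoRowDiagram, YoungDiagram.mem_ofRowLens]
  constructor
  · rintro ⟨h1, h2⟩
    simp only [List.length_cons, List.length_nil] at h1
    interval_cases i <;> simp_all
  · rintro (⟨rfl, hj⟩ | ⟨rfl, hj⟩) <;> exact ⟨by norm_num, by simpa⟩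

lemma card_twoRow {a b : ℕ} (h : b ≤ a) : (twoRowDiagram a b h).card = a + b := by
  have hc : (twoRowDiagram a b h).cells =
      ((Finset.range a).image fun j => (0,j)) ∪ ((Finset.range b).image fun j => (1,j)) := by
    ext ⟨i, j⟩
    rw [YoungDiagram.mem_cells, mem_twoRow]
    simp only [Finset.mem_union, Finset.mem_image, Finset.mem_range, Prod.mk.injEq]
    constructor
    · rintro (⟨rfl, hj⟩ | ⟨rfl, hj⟩)
      · exact Or.inl ⟨j, hj, rfl, rfl⟩
      · exact Or.inr ⟨j, hj, rfl, rfl⟩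
    · rintro (⟨x, hx, rfl, rfl⟩ | ⟨x, hx, rfl, rfl⟩)
      · exact Or.inl ⟨rfl, hx⟩
      · exact Or.inr ⟨rfl, hx⟩
  rw [YoungDiagram.card, hc, Finset.card_union_of_disjoint, Finset.card_image_of_injective,
    Finset.card_image_of_injective, Finset.card_range, Finset.card_range]
  · intro x y hxy; simpa using hxy
  · intro x y hxy; simpa using hxy
  · simp [Finset.disjoint_left]

lemma ncard_eq_of_bij (μ μ' : YoungDiagram) (c₀ : ℕ × ℕ)
    (hc : μ.cells = insert c₀ μ'.cells) (hc0 : c₀ ∉ μ') :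
    Set.ncard {f : ℕ × ℕ → ℕ | IsSYT μ f ∧ f c₀ = μ.card}
      = Set.ncard {f : ℕ × ℕ → ℕ | IsSYT μ' f} := by
  have hb := syt_update_bijOn μ μ' c₀ hc hc0
  rw [← hb.image_eq, Set.ncard_image_of_injOn hb.injOn]

lemma countA (a' b : ℕ) (h : b ≤ a') (h2 : b ≤ a' + 1) :
    Set.ncard {f : ℕ × ℕ → ℕ | IsSYT (twoRowDiagram (a'+1) b h2) f ∧ f (0, a') = a' + 1 + b}
      = Set.ncard {f : ℕ × ℕ → ℕ | IsSYT (twoRowDiagram a' b h) f} := by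
  have hcard := card_twoRow h2
  rw [← hcard]
  apply ncard_eq_of_bij
  · ext ⟨i, j⟩
    rw [YoungDiagram.mem_cells, mem_twoRow, Finset.mem_insert, YoungDiagram.mem_cells,
      mem_twoRow, Prod.mk.injEq]
    omega
  · rw [mem_twoRow]
    omega

lemma countB (a b' : ℕ) (h : b' + 1 ≤ a) (h2 : b' ≤ a) :
    Set.ncard {f : ℕ × ℕ → ℕ | IsSYT (twoRowDiagram a (b'+1) h) f ∧ f (1, b') = a + (b' + 1)}
      = Set.ncard {f : ℕ × ℕ → ℕ | IsSYT (twoRowDiagram a b' h2) f} := by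
  have hcard := card_twoRow h
  rw [← hcard]
  apply ncard_eq_of_bij
  · ext ⟨i, j⟩
    rw [YoungDiagram.mem_cells, mem_twoRow, Finset.mem_insert, YoungDiagram.mem_cells,
      mem_twoRow, Prod.mk.injEq]
    omega
  · rw [mem_twoRow]
    omega

lemma syt_top (a b : ℕ) (h : b ≤ a) (f : ℕ × ℕ → ℕ)
    (hf : IsSYT (twoRowDiagram a b h) f) (hN : 1 ≤ a + b) :
    (∃ j, j + 1 = a ∧ f (0, j) = a + b) ∨ (∃ j, j + 1 = b ∧ f (1, j) = a + b) := by
  obtain ⟨⟨hmaps, hinj, hsurj⟩, hrow, hcol, hzero⟩ := hf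
  have hcard := card_twoRow h
  have hNmem : (a + b) ∈ (Finset.Icc 1 (twoRowDiagram a b h).card : Set ℕ) := by
    simp only [Finset.coe_Icc, Set.mem_Icc, hcard]
    omega
  obtain ⟨c, hc, hfc⟩ := hsurj hNmem
  obtain ⟨i, j⟩ := c
  have hcm := (mem_twoRow h).1 (memc.1 hc)
  have hbound : ∀ x, x ∈ twoRowDiagram a b h → f x ≤ a + b := by
    intro x hx
    have := hmaps (memc.2 hx)
    simp only [Finset.coe_Icc, Set.mem_Icc, hcard] at this
    omega
  rcases hcm with ⟨rfl, hj⟩ | ⟨rfl, hj⟩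
  · left
    refine ⟨j, ?_, hfc⟩
    by_contra hne
    have hj1 : j + 1 < a := by omega
    have hmem : ((0:ℕ), j + 1) ∈ twoRowDiagram a b h := (mem_twoRow h).2 (Or.inl ⟨rfl, hj1⟩)
    have h1 := hrow 0 j hmem
    have h2 := hbound _ hmem
    omega
  · right
    refine ⟨j, ?_, hfc⟩
    by_contra hne
    have hj1 : j + 1 < b := by omega
    have hmem : ((1:ℕ), j + 1) ∈ twoRowDiagram a b h := (mem_twoRow h).2 (Or.inr ⟨rfl, hj1⟩)
    have h1 := hrow 1 j hmem
    have h2 := hbound _ hmem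
    omega

lemma syt_bound (a b : ℕ) (h : b ≤ a) (f : ℕ × ℕ → ℕ)
    (hf : IsSYT (twoRowDiagram a b h) f) :
    ∀ x, x ∈ twoRowDiagram a b h → f x ≤ a + b := by
  intro x hx
  have := hf.1.mapsTo (memc.2 hx)
  simp only [Finset.coe_Icc, Set.mem_Icc, card_twoRow h] at this
  omega

lemma syt_empty (h : (0:ℕ) ≤ 0) :
    {f : ℕ × ℕ → ℕ | IsSYT (twoRowDiagram 0 0 h) f} = {fun _ => 0} := by
  have hcells : (twoRowDiagram 0 0 h).cells = ∅ := by
    ext ⟨i, j⟩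
    rw [YoungDiagram.mem_cells, mem_twoRow]
    simp
  have hcard : (twoRowDiagram 0 0 h).card = 0 := by rw [YoungDiagram.card, hcells]; simp
  ext f
  simp only [Set.mem_setOf_eq, Set.mem_singleton_iff]
  constructor
  · rintro ⟨_, _, _, hzero⟩
    funext c
    apply hzero
    rw [← YoungDiagram.mem_cells, hcells]
    simp
  · rintro rfl
    refine ⟨?_, ?_, ?_, fun _ _ => rfl⟩
    · rw [hcells, hcard]
      simp only [Finset.coe_empty, Finset.Icc_self]
      convert Set.bijOn_empty _
      simp [Finset.Icc_eq_empty_iff]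
    · intro i j hm
      rw [← YoungDiagram.mem_cells, hcells] at hm
      simp at hm
    · intro i j hm
      rw [← YoungDiagram.mem_cells, hcells] at hm
      simp at hm

lemma syt_count_main : ∀ (N a b : ℕ) (h : b ≤ a), a + b = N →
    (Set.ncard {f : ℕ × ℕ → ℕ | IsSYT (twoRowDiagram a b h) f} : ℚ)
      = ((a + b).choose a : ℚ) * (2 * (a : ℚ) - ((a : ℚ) + (b : ℚ)) + 1) / ((a : ℚ) + 1) := by
  intro N
  induction N with
  | zero =>
    intro a b h hab
    obtain ⟨rfl, rfl⟩ : a = 0 ∧ b = 0 := by omega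
    rw [syt_empty h, Set.ncard_singleton]
    norm_num
  | succ n ih =>
    intro a b h hab
    set μ := twoRowDiagram a b h with hμ
    have hN1 : 1 ≤ a + b := by omega
    rcases Nat.eq_zero_or_pos b with rfl | hb
    · -- b = 0, a = n+1
      obtain ⟨a', rfl⟩ : ∃ a', a = a' + 1 := ⟨n, by omega⟩
      have hsplit : {f : ℕ × ℕ → ℕ | IsSYT μ f}
          = {f : ℕ × ℕ → ℕ | IsSYT μ f ∧ f (0, a') = a' + 1 + 0} := by
        ext f
        simp only [Set.mem_setOf_eq]
        refine ⟨fun hf => ⟨hf, ?_⟩, fun hf => hf.1⟩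
        rcases syt_top _ _ h f hf hN1 with ⟨j, hj, hv⟩ | ⟨j, hj, hv⟩
        · obtain rfl : j = a' := by omega
          exact hv
        · omega
      rw [hsplit, countA a' 0 (by omega) h, ih a' 0 (by omega) (by omega)]
      simp only [Nat.add_zero, Nat.choose_self, Nat.cast_one]
      push_cast
      have : (a' : ℚ) + 1 ≠ 0 := by positivity
      have : (a' : ℚ) + 1 + 1 ≠ 0 := by positivity
      field_simp
      ring
    · obtain ⟨b', rfl⟩ : ∃ b', b = b' + 1 := ⟨b - 1, by omega⟩
      rcases eq_or_lt_of_le h with heq | hlt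
      · -- a = b
        subst heq
        have hsplit : {f : ℕ × ℕ → ℕ | IsSYT μ f}
            = {f : ℕ × ℕ → ℕ | IsSYT μ f ∧ f (1, b') = (b' + 1) + (b' + 1)} := by
          ext f
          simp only [Set.mem_setOf_eq]
          refine ⟨fun hf => ⟨hf, ?_⟩, fun hf => hf.1⟩
          rcases syt_top _ _ h f hf hN1 with ⟨j, hj, hv⟩ | ⟨j, hj, hv⟩
          · exfalso
            have hjb : j < b' + 1 := by omega
            have hmem : ((1:ℕ), j) ∈ μ := (mem_twoRow h).2 (Or.inr ⟨rfl, hjb⟩)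
            have h1 := hf.2.2.1 0 j hmem
            have h2 := syt_bound _ _ h f hf _ hmem
            simp only [zero_add] at h1
            omega
          · obtain rfl : j = b' := by omega
            exact hv
        rw [hsplit, countB (b'+1) b' h (by omega), ih (b'+1) b' (by omega) (by omega)]
        have hch : ((2*b'+2).choose (b'+1)) = 2 * ((2*b'+1).choose (b'+1)) := by
          have h1 : (2*b'+2).choose (b'+1) = (2*b'+1).choose b' + (2*b'+1).choose (b'+1) :=
            Nat.choose_succ_succ' (2*b'+1) b'
          have h2 : (2*b'+1).choose b' = (2*b'+1).choose (b'+1) := by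
            have := Nat.choose_symm (n := 2*b'+1) (k := b'+1) (by omega)
            simpa [show 2*b'+1 - (b'+1) = b' by omega] using this
          omega
        have hre : (b'+1) + (b'+1) = 2*b'+2 := by ring
        have hre2 : (b'+1) + b' = 2*b'+1 := by ring
        rw [hre, hre2, hch]
        push_cast
        have h1 : (b' : ℚ) + 1 + 1 ≠ 0 := by positivity
        field_simp
        ring
      · -- a > b
        obtain ⟨p, rfl⟩ : ∃ p, a = p + 1 := ⟨a - 1, by omega⟩
        have hpb : b' + 1 ≤ p := by omega
        set q := b' with hq
        have hA : {f : ℕ × ℕ → ℕ | IsSYT μ f}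
            = {f : ℕ × ℕ → ℕ | IsSYT μ f ∧ f (0, p) = p + 1 + (q + 1)}
              ∪ {f : ℕ × ℕ → ℕ | IsSYT μ f ∧ f (1, q) = (p + 1) + (q + 1)} := by
          ext f
          simp only [Set.mem_setOf_eq, Set.mem_union]
          constructor
          · intro hf
            rcases syt_top _ _ h f hf hN1 with ⟨j, hj, hv⟩ | ⟨j, hj, hv⟩
            · obtain rfl : j = p := by omega
              exact Or.inl ⟨hf, hv⟩
            · obtain rfl : j = q := by omega
              exact Or.inr ⟨hf, hv⟩
          · rintro (⟨hf, _⟩ | ⟨hf, _⟩) <;> exact hf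
        have hdisj : Disjoint {f : ℕ × ℕ → ℕ | IsSYT μ f ∧ f (0, p) = p + 1 + (q + 1)}
            {f : ℕ × ℕ → ℕ | IsSYT μ f ∧ f (1, q) = (p + 1) + (q + 1)} := by
          rw [Set.disjoint_left]
          rintro f ⟨hf, hv1⟩ ⟨_, hv2⟩
          have hm1 : ((0:ℕ), p) ∈ μ := (mem_twoRow h).2 (Or.inl ⟨rfl, by omega⟩)
          have hm2 : ((1:ℕ), q) ∈ μ := (mem_twoRow h).2 (Or.inr ⟨rfl, by omega⟩)
          have := hf.1.injOn (memc.2 hm1) (memc.2 hm2) (by rw [hv1, hv2])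
          simp at this
        have hfinA : {f : ℕ × ℕ → ℕ | IsSYT μ f ∧ f (0, p) = p + 1 + (q + 1)}.Finite :=
          (syt_finite μ).subset (fun f hf => hf.1)
        have hfinB : {f : ℕ × ℕ → ℕ | IsSYT μ f ∧ f (1, q) = (p + 1) + (q + 1)}.Finite :=
          (syt_finite μ).subset (fun f hf => hf.1)
        rw [hA, Set.ncard_union_eq hdisj hfinA hfinB]
        push_cast
        rw [countA p (q+1) hpb h, countB (p+1) q h (by omega)]
        push_cast
        rw [ih p (q+1) hpb (by omega), ih (p+1) q (by omega) (by omega)]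
        rw [show p + 1 + q = p + (q + 1) by omega]
        -- now pure arithmetic
        have hpas : ((p+1) + (q+1)).choose (p+1)
            = (p + (q+1)).choose p + (p + (q+1)).choose (p+1) := by
          have := Nat.choose_succ_succ' (p + (q+1)) p
          convert this using 2
          omega
        have hrel : ((p + (q+1)).choose (p+1) : ℚ) * ((p:ℚ)+1)
            = ((p + (q+1)).choose p : ℚ) * ((q:ℚ)+1) := by
          have := Nat.choose_succ_right_eq (p + (q+1)) p
          have h2 : p + (q+1) - p = q + 1 := by omega
          rw [h2] at this
          exact_mod_cast this
        rw [hpas]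
        push_cast
        set X := ((p + (q+1)).choose p : ℚ) with hX
        set Y := ((p + (q+1)).choose (p+1) : ℚ) with hY
        have h1 : (p : ℚ) + 1 ≠ 0 := by positivity
        have h2 : (p : ℚ) + 1 + 1 ≠ 0 := by positivity
        field_simp
        linear_combination hrel


/-- The number of standard Young tableaux of the two-row shape `(r1, r2)` with
`r1 + r2 = N`, `r1 ≥ r2`, equals `binom(N, r1)·(2r1 − N + 1)/(r1 + 1)`
(the hook-length formula for two-row shapes). -/
theorem card_SYT_two_rows (N r1 r2 : ℕ) (h21 : r2 ≤ r1) (hsum : r1 + r2 = N) :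
    (Set.ncard {f : ℕ × ℕ → ℕ | IsSYT (twoRowDiagram r1 r2 h21) f} : ℚ)
      = (N.choose r1 : ℚ) * (2 * (r1 : ℚ) - (N : ℚ) + 1) / ((r1 : ℚ) + 1) := by
  subst hsum
  rw [syt_count_main (r1 + r2) r1 r2 h21 rfl]
  push_cast
  ring
end

section
/- With the amplitude-rebalancing projectors Π_w = |0_w⟩⟨0_w| + |1_w⟩⟨1_w| and Π̄_w = |0̄_w⟩⟨0̄_w| + |1̄_w⟩⟨1̄_w|, and input |ψ⟩ = cosθ |0_L⟩ + e^{iφ} sinθ |1_L⟩, the projection probabilities are ‖Π_w|ψ⟩‖² = 3/4 + (w/4)cos2θ and ‖Π̄_w|ψ⟩‖² = 1/4 − (w/4)cos2θ; in particular for |w| ≤ 1/2 the success probability ‖Π_w|ψ⟩‖² ≥ 5/8. -/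
open scoped ComplexInnerProductSpace in
private lemma inner_expand {E : Type*} [NormedAddCommGroup E] [InnerProductSpace ℂ E]
    (x y u v : E) (a b c d : ℂ) :
    ⟪a • x + b • y, c • u + d • v⟫ =
      (starRingEnd ℂ) a * c * ⟪x, u⟫ + (starRingEnd ℂ) a * d * ⟪x, v⟫ +
      (starRingEnd ℂ) b * c * ⟪y, u⟫ + (starRingEnd ℂ) b * d * ⟪y, v⟫ := by
  simp only [inner_add_left, inner_add_right, inner_smul_left, inner_smul_right]
  ring

open scoped ComplexInnerProductSpace in
private lemma norm_combo {E : Type*} [NormedAddCommGroup E] [InnerProductSpace ℂ E]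
    (x y : E) (a b : ℂ) (hx : ⟪x, x⟫ = 1) (hy : ⟪y, y⟫ = 1) (hxy : ⟪x, y⟫ = 0) :
    ‖a • x + b • y‖ ^ 2 = ‖a‖ ^ 2 + ‖b‖ ^ 2 := by
  have hx' : ‖x‖ = 1 := by
    have h2 : ‖x‖ ^ 2 = 1 := by
      rw [← inner_self_eq_norm_sq (𝕜 := ℂ) x, hx]; simp
    nlinarith [norm_nonneg x, sq_nonneg (‖x‖ - 1), sq_nonneg (‖x‖ + 1)]
  have hy' : ‖y‖ = 1 := by
    have h2 : ‖y‖ ^ 2 = 1 := by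
      rw [← inner_self_eq_norm_sq (𝕜 := ℂ) y, hy]; simp
    nlinarith [norm_nonneg y, sq_nonneg (‖y‖ - 1), sq_nonneg (‖y‖ + 1)]
  have horth : ⟪a • x, b • y⟫ = 0 := by
    rw [inner_smul_left, inner_smul_right, hxy]; ring
  rw [norm_add_sq (𝕜 := ℂ), horth]
  simp [norm_smul, hx', hy']

set_option maxHeartbeats 1000000 in
open scoped ComplexInnerProductSpace in
/-- With the amplitude-rebalancing projectors `Π_w` and `Π̄_w` applied to
`|ψ⟩ = cos θ |0_L⟩ + e^{iφ} sin θ |1_L⟩`, the projection probabilities are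
`3/4 + (w/4)cos 2θ` and `1/4 − (w/4)cos 2θ`; the first is at least `5/8` for `|w| ≤ 1/2`. -/
theorem rebalancing_projection_probabilities
    {E : Type*} [NormedAddCommGroup E] [InnerProductSpace ℂ E]
    (u0 u0' u1 u1' : E) (h : Orthonormal ℂ ![u0, u0', u1, u1'])
    (w θ φ : ℝ) (hw : |w| ≤ 1 / 2)
    (z0 z1 zb0 zb1 ψ : E)
    (hz0 : z0 = (2 : ℂ)⁻¹ • ((Real.sqrt (3 + w) : ℂ) • u0 + (Real.sqrt (1 - w) : ℂ) • u0'))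
    (hz1 : z1 = (2 : ℂ)⁻¹ • ((Real.sqrt (3 - w) : ℂ) • u1 + (Real.sqrt (1 + w) : ℂ) • u1'))
    (hzb0 : zb0 = (2 : ℂ)⁻¹ • ((Real.sqrt (1 - w) : ℂ) • u0 - (Real.sqrt (3 + w) : ℂ) • u0'))
    (hzb1 : zb1 = (2 : ℂ)⁻¹ • ((Real.sqrt (1 + w) : ℂ) • u1 - (Real.sqrt (3 - w) : ℂ) • u1'))
    (hψ : ψ = (Real.cos θ : ℂ) • u0 + (Complex.exp (φ * Complex.I) * Real.sin θ) • u1) :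
    ‖⟪z0, ψ⟫ • z0 + ⟪z1, ψ⟫ • z1‖ ^ 2 = 3 / 4 + (w / 4) * Real.cos (2 * θ) ∧
    ‖⟪zb0, ψ⟫ • zb0 + ⟪zb1, ψ⟫ • zb1‖ ^ 2 = 1 / 4 - (w / 4) * Real.cos (2 * θ) ∧
    (5 : ℝ) / 8 ≤ ‖⟪z0, ψ⟫ • z0 + ⟪z1, ψ⟫ • z1‖ ^ 2 := by
  obtain ⟨hwl, hwr⟩ := abs_le.mp hw
  have h3w : (0:ℝ) ≤ 3 + w := by linarith
  have h3w' : (0:ℝ) ≤ 3 - w := by linarith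
  have h1w : (0:ℝ) ≤ 1 - w := by linarith
  have h1w' : (0:ℝ) ≤ 1 + w := by linarith
  have s0 : Real.sqrt (3 + w) ^ 2 = 3 + w := Real.sq_sqrt h3w
  have s1 : Real.sqrt (3 - w) ^ 2 = 3 - w := Real.sq_sqrt h3w'
  have s2 : Real.sqrt (1 - w) ^ 2 = 1 - w := Real.sq_sqrt h1w
  have s3 : Real.sqrt (1 + w) ^ 2 = 1 + w := Real.sq_sqrt h1w'
  have hite := orthonormal_iff_ite.mp h
  have h00 : ⟪u0, u0⟫ = 1 := by simpa using hite 0 0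
  have h01 : ⟪u0, u0'⟫ = 0 := by simpa using hite 0 1
  have h02 : ⟪u0, u1⟫ = 0 := by simpa using hite 0 2
  have h03 : ⟪u0, u1'⟫ = 0 := by simpa using hite 0 3
  have h10 : ⟪u0', u0⟫ = 0 := by simpa using hite 1 0
  have h11 : ⟪u0', u0'⟫ = 1 := by simpa using hite 1 1
  have h12 : ⟪u0', u1⟫ = 0 := by simpa using hite 1 2
  have h13 : ⟪u0', u1'⟫ = 0 := by simpa using hite 1 3
  have h20 : ⟪u1, u0⟫ = 0 := by simpa using hite 2 0
  have h21 : ⟪u1, u0'⟫ = 0 := by simpa using hite 2 1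
  have h22 : ⟪u1, u1⟫ = 1 := by simpa using hite 2 2
  have h23 : ⟪u1, u1'⟫ = 0 := by simpa using hite 2 3
  have h30 : ⟪u1', u0⟫ = 0 := by simpa using hite 3 0
  have h31 : ⟪u1', u0'⟫ = 0 := by simpa using hite 3 1
  have h32 : ⟪u1', u1⟫ = 0 := by simpa using hite 3 2
  have h33 : ⟪u1', u1'⟫ = 1 := by simpa using hite 3 3
  -- rewrite z's in plain combination form
  have hz0' : z0 = ((Real.sqrt (3 + w) / 2 : ℝ) : ℂ) • u0 + ((Real.sqrt (1 - w) / 2 : ℝ) : ℂ) • u0' := by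
    rw [hz0, smul_add, smul_smul, smul_smul]; push_cast; ring_nf
  have hz1' : z1 = ((Real.sqrt (3 - w) / 2 : ℝ) : ℂ) • u1 + ((Real.sqrt (1 + w) / 2 : ℝ) : ℂ) • u1' := by
    rw [hz1, smul_add, smul_smul, smul_smul]; push_cast; ring_nf
  have hzb0' : zb0 = ((Real.sqrt (1 - w) / 2 : ℝ) : ℂ) • u0 + ((-(Real.sqrt (3 + w)) / 2 : ℝ) : ℂ) • u0' := by
    rw [hzb0, smul_sub, smul_smul, smul_smul, sub_eq_add_neg, ← neg_smul]; push_cast; ring_nf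
  have hzb1' : zb1 = ((Real.sqrt (1 + w) / 2 : ℝ) : ℂ) • u1 + ((-(Real.sqrt (3 - w)) / 2 : ℝ) : ℂ) • u1' := by
    rw [hzb1, smul_sub, smul_smul, smul_smul, sub_eq_add_neg, ← neg_smul]; push_cast; ring_nf
  -- inner products with ψ
  have hA0 : ⟪z0, ψ⟫ = ((Real.sqrt (3 + w) / 2 * Real.cos θ : ℝ) : ℂ) := by
    rw [hz0', hψ, inner_expand, h00, h02, h10, h12]
    simp only [Complex.conj_ofReal]
    push_cast; ring
  have hA1 : ⟪z1, ψ⟫ = ((Real.sqrt (3 - w) / 2 : ℝ) : ℂ) * (Complex.exp (φ * Complex.I) * Real.sin θ) := by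
    rw [hz1', hψ, inner_expand, h20, h22, h30, h32]
    simp only [Complex.conj_ofReal]
    ring
  have hB0 : ⟪zb0, ψ⟫ = ((Real.sqrt (1 - w) / 2 * Real.cos θ : ℝ) : ℂ) := by
    rw [hzb0', hψ, inner_expand, h00, h02, h10, h12]
    simp only [Complex.conj_ofReal]
    push_cast; ring
  have hB1 : ⟪zb1, ψ⟫ = ((Real.sqrt (1 + w) / 2 : ℝ) : ℂ) * (Complex.exp (φ * Complex.I) * Real.sin θ) := by
    rw [hzb1', hψ, inner_expand, h20, h22, h30, h32]
    simp only [Complex.conj_ofReal]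
    ring
  -- unit norms and orthogonality of z's
  have hzz0 : ⟪z0, z0⟫ = 1 := by
    rw [hz0', inner_expand, h00, h01, h10, h11]
    simp only [Complex.conj_ofReal]
    rw [show ((Real.sqrt (3+w)/2 : ℝ) : ℂ) * ((Real.sqrt (3+w)/2 : ℝ) : ℂ) * 1 +
        ((Real.sqrt (3+w)/2 : ℝ) : ℂ) * ((Real.sqrt (1-w)/2 : ℝ) : ℂ) * 0 +
        ((Real.sqrt (1-w)/2 : ℝ) : ℂ) * ((Real.sqrt (3+w)/2 : ℝ) : ℂ) * 0 +
        ((Real.sqrt (1-w)/2 : ℝ) : ℂ) * ((Real.sqrt (1-w)/2 : ℝ) : ℂ) * 1 =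
        (((Real.sqrt (3+w)^2 + Real.sqrt (1-w)^2) / 4 : ℝ) : ℂ) by push_cast; ring]
    rw [s0, s2]; norm_num
  have hzz1 : ⟪z1, z1⟫ = 1 := by
    rw [hz1', inner_expand, h22, h23, h32, h33]
    simp only [Complex.conj_ofReal]
    rw [show ((Real.sqrt (3-w)/2 : ℝ) : ℂ) * ((Real.sqrt (3-w)/2 : ℝ) : ℂ) * 1 +
        ((Real.sqrt (3-w)/2 : ℝ) : ℂ) * ((Real.sqrt (1+w)/2 : ℝ) : ℂ) * 0 +
        ((Real.sqrt (1+w)/2 : ℝ) : ℂ) * ((Real.sqrt (3-w)/2 : ℝ) : ℂ) * 0 +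
        ((Real.sqrt (1+w)/2 : ℝ) : ℂ) * ((Real.sqrt (1+w)/2 : ℝ) : ℂ) * 1 =
        (((Real.sqrt (3-w)^2 + Real.sqrt (1+w)^2) / 4 : ℝ) : ℂ) by push_cast; ring]
    rw [s1, s3]; norm_num
  have hzzb0 : ⟪zb0, zb0⟫ = 1 := by
    rw [hzb0', inner_expand, h00, h01, h10, h11]
    simp only [Complex.conj_ofReal]
    rw [show ((Real.sqrt (1-w)/2 : ℝ) : ℂ) * ((Real.sqrt (1-w)/2 : ℝ) : ℂ) * 1 +
        ((Real.sqrt (1-w)/2 : ℝ) : ℂ) * ((-(Real.sqrt (3+w))/2 : ℝ) : ℂ) * 0 +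
        ((-(Real.sqrt (3+w))/2 : ℝ) : ℂ) * ((Real.sqrt (1-w)/2 : ℝ) : ℂ) * 0 +
        ((-(Real.sqrt (3+w))/2 : ℝ) : ℂ) * ((-(Real.sqrt (3+w))/2 : ℝ) : ℂ) * 1 =
        (((Real.sqrt (3+w)^2 + Real.sqrt (1-w)^2) / 4 : ℝ) : ℂ) by push_cast; ring]
    rw [s0, s2]; norm_num
  have hzzb1 : ⟪zb1, zb1⟫ = 1 := by
    rw [hzb1', inner_expand, h22, h23, h32, h33]
    simp only [Complex.conj_ofReal]
    rw [show ((Real.sqrt (1+w)/2 : ℝ) : ℂ) * ((Real.sqrt (1+w)/2 : ℝ) : ℂ) * 1 +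
        ((Real.sqrt (1+w)/2 : ℝ) : ℂ) * ((-(Real.sqrt (3-w))/2 : ℝ) : ℂ) * 0 +
        ((-(Real.sqrt (3-w))/2 : ℝ) : ℂ) * ((Real.sqrt (1+w)/2 : ℝ) : ℂ) * 0 +
        ((-(Real.sqrt (3-w))/2 : ℝ) : ℂ) * ((-(Real.sqrt (3-w))/2 : ℝ) : ℂ) * 1 =
        (((Real.sqrt (3-w)^2 + Real.sqrt (1+w)^2) / 4 : ℝ) : ℂ) by push_cast; ring]
    rw [s1, s3]; norm_num
  have hzz01 : ⟪z0, z1⟫ = 0 := by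
    rw [hz0', hz1', inner_expand, h02, h03, h12, h13]; ring
  have hzzb01 : ⟪zb0, zb1⟫ = 0 := by
    rw [hzb0', hzb1', inner_expand, h02, h03, h12, h13]; ring
  -- norms of the coefficients
  have hnA0 : ‖⟪z0, ψ⟫‖ ^ 2 = (3 + w) / 4 * Real.cos θ ^ 2 := by
    rw [hA0, Complex.norm_real, Real.norm_eq_abs, sq_abs]
    nlinarith [s0]
  have hnB0 : ‖⟪zb0, ψ⟫‖ ^ 2 = (1 - w) / 4 * Real.cos θ ^ 2 := by
    rw [hB0, Complex.norm_real, Real.norm_eq_abs, sq_abs]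
    nlinarith [s2]
  have hexp : ‖Complex.exp (φ * Complex.I)‖ = 1 := by
    rw [Complex.norm_exp]
    simp
  have hnA1 : ‖⟪z1, ψ⟫‖ ^ 2 = (3 - w) / 4 * Real.sin θ ^ 2 := by
    rw [hA1, norm_mul, norm_mul, hexp, Complex.norm_real, Complex.norm_real]
    rw [mul_pow, mul_pow, one_pow]
    simp only [Real.norm_eq_abs, sq_abs]
    nlinarith [s1]
  have hnB1 : ‖⟪zb1, ψ⟫‖ ^ 2 = (1 + w) / 4 * Real.sin θ ^ 2 := by
    rw [hB1, norm_mul, norm_mul, hexp, Complex.norm_real, Complex.norm_real]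
    rw [mul_pow, mul_pow, one_pow]
    simp only [Real.norm_eq_abs, sq_abs]
    nlinarith [s3]
  have hP : ‖⟪z0, ψ⟫ • z0 + ⟪z1, ψ⟫ • z1‖ ^ 2 = 3 / 4 + (w / 4) * Real.cos (2 * θ) := by
    rw [norm_combo z0 z1 _ _ hzz0 hzz1 hzz01, hnA0, hnA1, Real.cos_two_mul]
    linear_combination ((3 - w) / 4) * (Real.sin_sq_add_cos_sq θ)
  have hQ : ‖⟪zb0, ψ⟫ • zb0 + ⟪zb1, ψ⟫ • zb1‖ ^ 2 = 1 / 4 - (w / 4) * Real.cos (2 * θ) := by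
    rw [norm_combo zb0 zb1 _ _ hzzb0 hzzb1 hzzb01, hnB0, hnB1, Real.cos_two_mul]
    linear_combination ((1 + w) / 4) * (Real.sin_sq_add_cos_sq θ)
  refine ⟨hP, hQ, ?_⟩
  rw [hP]
  have habs : |w * Real.cos (2 * θ)| ≤ 1 / 2 := by
    rw [abs_mul]
    calc |w| * |Real.cos (2 * θ)| ≤ (1 / 2) * 1 :=
          mul_le_mul hw (Real.abs_cos_le_one (2 * θ)) (abs_nonneg _) (by norm_num)
      _ = 1 / 2 := by norm_num
  have hge := neg_abs_le (w * Real.cos (2 * θ))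
  linarith
end
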